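/- Let (A,∂) be the tensor algebra over ℤ/2 on a finite set R of generators with differential ∂ satisfying ∂²=0 and the Leibniz rule, and let ε₁, ε₂ be two augmentations of A. Define the bilinearized differential d^{ε₁,ε₂}: V → V on the ℤ/2-vector space V spanned by R as follows: for a generator a and each word r₁r₂⋯r_k appearing in ∂a, add Σⱼ ε₁(r₁)⋯ε₁(r_{j−1})·ε₂(r_{j+1})⋯ε₂(r_k)·rⱼ to d^{ε₁,ε₂}a (a word of length 0, i.e., a constant 1, contributes nothing). Then d^{ε₁,ε₂} ∘ d^{ε₁,ε₂} = 0. -/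

import Mathlib

set_option linter.unusedSectionVars false


open scoped BigOperators

variable {R : Type*} [Fintype R] [DecidableEq R]

/-- The tensor algebra over ℤ/2 on the generator set `R`, realized as the monoid algebra
of the free monoid on `R`, so that elements are ℤ/2-combinations of words. -/
noncomputable abbrev TA (R : Type*) : Type _ := MonoidAlgebra (ZMod 2) (FreeMonoid R)

/-- The generator of the tensor algebra corresponding to `r : R`. -/
noncomputable def gen (r : R) : TA R := MonoidAlgebra.of (ZMod 2) (FreeMonoid R) (FreeMonoid.of r)

/-- The contribution of a single word `w` to the bilinearized differential, in the
direction of the generator `r`: the sum over occurrences of `r` in `w` of the product of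
the `e1`-values of the letters to the left and the `e2`-values of the letters to the
right.  (Words of length 0 contribute nothing.) -/
def wordContrib (e1 e2 : R → ZMod 2) (w : FreeMonoid R) (r : R) : ZMod 2 :=
  ∑ j : Fin w.toList.length,
    if w.toList.get j = r then
      ((w.toList.take (j : ℕ)).map e1).prod * ((w.toList.drop ((j : ℕ) + 1)).map e2).prod
    else 0

/-- The matrix of the bilinearized differential `d^{ε₁,ε₂}` on the ℤ/2-vector space
spanned by `R`: the coefficient of the generator `r` in `d^{ε₁,ε₂} a`. -/
noncomputable def dmat (d : TA R →ₗ[ZMod 2] TA R) (e1 e2 : R → ZMod 2) (a r : R) : ZMod 2 :=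
  (d (gen a)).coeff.sum fun w c => c * wordContrib e1 e2 w r

/-- The bilinearized differential squares to zero: if `∂` is a differential on the tensor
algebra (Leibniz rule, `∂² = 0`) and `ε₁, ε₂` are augmentations, then
`d^{ε₁,ε₂} ∘ d^{ε₁,ε₂} = 0`. -/
def contribL (e1 e2 : R → ZMod 2) (l : List R) (r : R) : ZMod 2 :=
  ∑ j : Fin l.length,
    if l.get j = r then ((l.take (j:ℕ)).map e1).prod * ((l.drop ((j:ℕ)+1)).map e2).prod else 0

lemma wordContrib_eq (e1 e2 : R → ZMod 2) (w : FreeMonoid R) (r : R) :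
    wordContrib e1 e2 w r = contribL e1 e2 w.toList r := rfl

-- eps on single
lemma eps_single (ε : TA R →ₐ[ZMod 2] ZMod 2) (w : FreeMonoid R) (c : ZMod 2) :
    ε (MonoidAlgebra.single w c) = c * ((w.toList.map fun g => ε (gen g)).prod) := by
  have h1 : ε (MonoidAlgebra.of (ZMod 2) (FreeMonoid R) w)
      = ((w.toList.map fun g => ε (gen g)).prod) := by
    have h := FreeMonoid.hom_eq
      (f := (ε : TA R →* ZMod 2).comp (MonoidAlgebra.of (ZMod 2) (FreeMonoid R)))
      (g := FreeMonoid.lift fun g => ε (gen g)) ?_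
    · have := congrFun (congrArg DFunLike.coe h) w
      simpa [FreeMonoid.lift_apply] using this
    · intro x; simp [gen]
  have h2 : MonoidAlgebra.single w c = c • MonoidAlgebra.single w (1 : ZMod 2) := by
    rw [MonoidAlgebra.smul_single']; ring_nf
  rw [h2, map_smul, smul_eq_mul, ← MonoidAlgebra.of_apply, h1]

noncomputable def philin (e1 e2 : R → ZMod 2) (r : R) : TA R →ₗ[ZMod 2] ZMod 2 :=
  (Finsupp.lsum (ZMod 2) fun w => (wordContrib e1 e2 w r) • (LinearMap.id : ZMod 2 →ₗ[ZMod 2] ZMod 2))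
    ∘ₗ (MonoidAlgebra.coeffLinearEquiv (ZMod 2)).toLinearMap

lemma philin_single (e1 e2 : R → ZMod 2) (r : R) (w : FreeMonoid R) (c : ZMod 2) :
    philin e1 e2 r (MonoidAlgebra.single w c) = c * wordContrib e1 e2 w r := by
  rw [philin]
  change Finsupp.lsum (ZMod 2) (fun w => _) (Finsupp.single w c) = _
  erw [Finsupp.lsum_single]
  simp [mul_comm]

lemma philin_apply (e1 e2 : R → ZMod 2) (r : R) (u : TA R) :
    philin e1 e2 r u = u.coeff.sum fun w c => c * wordContrib e1 e2 w r := by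
  rw [philin]
  change Finsupp.lsum (ZMod 2) (fun w => _) u.coeff = _
  erw [Finsupp.lsum_apply]
  exact Finsupp.sum_congr fun w _ => mul_comm _ _

lemma contribL_nil (e1 e2 : R → ZMod 2) (r : R) : contribL e1 e2 [] r = 0 := by
  simp [contribL]

lemma contribL_cons (e1 e2 : R → ZMod 2) (a : R) (l : List R) (r : R) :
    contribL e1 e2 (a :: l) r =
      (if a = r then (l.map e2).prod else 0) + e1 a * contribL e1 e2 l r := by
  rw [contribL]
  simp only [List.length_cons]
  rw [Fin.sum_univ_succ]
  simp [contribL, List.take_succ_cons, List.drop_succ_cons, Finset.mul_sum, mul_ite,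
    mul_assoc]

lemma contribL_appendW (e1 e2 : R → ZMod 2) (l1 l2 : List R) (r : R) :
    contribL e1 e2 (l1 ++ l2) r =
      contribL e1 e2 l1 r * (l2.map e2).prod + (l1.map e1).prod * contribL e1 e2 l2 r := by
  induction l1 with
  | nil => simp [contribL_nil]
  | cons a t ih =>
      rw [List.cons_append, contribL_cons, contribL_cons, ih]
      simp only [List.map_append, List.prod_append, List.map_cons, List.prod_cons]
      split_ifs <;> ring

lemma philin_mul (ε1 ε2 : TA R →ₐ[ZMod 2] ZMod 2) (r : R) (u v : TA R) :
    philin (fun g => ε1 (gen g)) (fun g => ε2 (gen g)) r (u * v)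
      = philin (fun g => ε1 (gen g)) (fun g => ε2 (gen g)) r u * ε2 v
        + ε1 u * philin (fun g => ε1 (gen g)) (fun g => ε2 (gen g)) r v := by
  set e1 : R → ZMod 2 := fun g => ε1 (gen g) with he1
  set e2 : R → ZMod 2 := fun g => ε2 (gen g) with he2
  have haddL : ∀ v f g : TA R,
      (philin e1 e2 r (f * v) = philin e1 e2 r f * ε2 v + ε1 f * philin e1 e2 r v) →
      (philin e1 e2 r (g * v) = philin e1 e2 r g * ε2 v + ε1 g * philin e1 e2 r v) →
      (philin e1 e2 r ((f + g) * v)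
        = philin e1 e2 r (f + g) * ε2 v + ε1 (f + g) * philin e1 e2 r v) := by
    intro v f g hf hg
    rw [add_mul, map_add, hf, hg, map_add, map_add]; ring
  have haddR : ∀ u f g : TA R,
      (philin e1 e2 r (u * f) = philin e1 e2 r u * ε2 f + ε1 u * philin e1 e2 r f) →
      (philin e1 e2 r (u * g) = philin e1 e2 r u * ε2 g + ε1 u * philin e1 e2 r g) →
      (philin e1 e2 r (u * (f + g))
        = philin e1 e2 r u * ε2 (f + g) + ε1 u * philin e1 e2 r (f + g)) := by
    intro u f g hf hg
    rw [mul_add, map_add, hf, hg, map_add, map_add]; ring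
  have hzL : ∀ v : TA R, philin e1 e2 r ((0 : TA R) * v)
      = philin e1 e2 r (0 : TA R) * ε2 v + ε1 (0 : TA R) * philin e1 e2 r v := by
    intro v; rw [zero_mul]; simp
  have hzR : ∀ u : TA R, philin e1 e2 r (u * (0 : TA R))
      = philin e1 e2 r u * ε2 (0 : TA R) + ε1 u * philin e1 e2 r (0 : TA R) := by
    intro u; rw [mul_zero]; simp
  induction u using MonoidAlgebra.induction_linear with
  | zero => exact hzL v
  | add f g hf hg => exact haddL v f g hf hg
  | single w c =>
      induction v using MonoidAlgebra.induction_linear with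
      | zero => exact hzR _
      | add f g hf hg => exact haddR _ f g hf hg
      | single w' c' =>
          rw [MonoidAlgebra.single_mul_single, philin_single, philin_single, philin_single,
            eps_single ε1, eps_single ε2, wordContrib_eq, wordContrib_eq, wordContrib_eq,
            FreeMonoid.toList_mul, contribL_appendW]
          ring

lemma d_one (d : TA R →ₗ[ZMod 2] TA R)
    (hLeibniz : ∀ u v : TA R, d (u * v) = d u * v + u * d v) : d (1 : TA R) = 0 := by
  have h := hLeibniz 1 1
  rw [one_mul, mul_one, one_mul] at h
  exact (left_eq_add.mp h)

lemma philin_gen (e1 e2 : R → ZMod 2) (m a : R) :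
    philin e1 e2 m (gen a) = if a = m then 1 else 0 := by
  rw [gen, MonoidAlgebra.of_apply, philin_single, wordContrib_eq]
  simp [contribL_cons, contribL_nil, FreeMonoid.toList_of]

lemma philin_one (e1 e2 : R → ZMod 2) (m : R) : philin e1 e2 m (1 : TA R) = 0 := by
  rw [MonoidAlgebra.one_def, philin_single, wordContrib_eq]
  simp [contribL_nil, FreeMonoid.toList_one]

lemma keyB (d : TA R →ₗ[ZMod 2] TA R)
    (hLeibniz : ∀ u v : TA R, d (u * v) = d u * v + u * d v)
    (ε1 ε2 : TA R →ₐ[ZMod 2] ZMod 2)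
    (hε1 : ∀ u : TA R, ε1 (d u) = 0) (hε2 : ∀ u : TA R, ε2 (d u) = 0) (r : R) :
    ∀ u : TA R,
      philin (fun g => ε1 (gen g)) (fun g => ε2 (gen g)) r (d u)
        = ∑ m : R, philin (fun g => ε1 (gen g)) (fun g => ε2 (gen g)) m u *
            philin (fun g => ε1 (gen g)) (fun g => ε2 (gen g)) r (d (gen m)) := by
  have B0 : ∀ l : List R,
      philin (fun g => ε1 (gen g)) (fun g => ε2 (gen g)) r
          (d (MonoidAlgebra.of (ZMod 2) (FreeMonoid R) (FreeMonoid.ofList l)))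
        = ∑ m : R, philin (fun g => ε1 (gen g)) (fun g => ε2 (gen g)) m
              (MonoidAlgebra.of (ZMod 2) (FreeMonoid R) (FreeMonoid.ofList l)) *
            philin (fun g => ε1 (gen g)) (fun g => ε2 (gen g)) r (d (gen m)) := by
    intro l
    induction l with
    | nil =>
        have h1 : FreeMonoid.ofList ([] : List R) = 1 := rfl
        rw [h1, map_one, d_one d hLeibniz, map_zero]
        simp [philin_one]
    | cons a t ih =>
        have hW : FreeMonoid.ofList (a :: t) = FreeMonoid.of a * FreeMonoid.ofList t := rfl
        have hga : MonoidAlgebra.of (ZMod 2) (FreeMonoid R) (FreeMonoid.of a) = gen a := rfl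
        rw [hW, map_mul, hga, hLeibniz, map_add, philin_mul ε1 ε2, philin_mul ε1 ε2,
          hε1, hε2, ih]
        simp only [philin_mul ε1 ε2, philin_gen, add_mul, ite_mul, one_mul, zero_mul,
          Finset.sum_add_distrib, Finset.sum_ite_eq, Finset.mem_univ, if_true,
          Finset.mul_sum]
        simp only [ite_self, add_zero, zero_add]
        congr 1
        · ring
        · exact Finset.sum_congr rfl fun x _ => by ring
  have haddB : ∀ f g : TA R,
      (philin (fun g => ε1 (gen g)) (fun g => ε2 (gen g)) r (d f)
        = ∑ m : R, philin (fun g => ε1 (gen g)) (fun g => ε2 (gen g)) m f *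
            philin (fun g => ε1 (gen g)) (fun g => ε2 (gen g)) r (d (gen m))) →
      (philin (fun g => ε1 (gen g)) (fun g => ε2 (gen g)) r (d g)
        = ∑ m : R, philin (fun g => ε1 (gen g)) (fun g => ε2 (gen g)) m g *
            philin (fun g => ε1 (gen g)) (fun g => ε2 (gen g)) r (d (gen m))) →
      (philin (fun g => ε1 (gen g)) (fun g => ε2 (gen g)) r (d (f + g))
        = ∑ m : R, philin (fun g => ε1 (gen g)) (fun g => ε2 (gen g)) m (f + g) *
            philin (fun g => ε1 (gen g)) (fun g => ε2 (gen g)) r (d (gen m))) := by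
    intro f g hf hg
    rw [map_add, map_add, hf, hg, ← Finset.sum_add_distrib]
    exact Finset.sum_congr rfl fun m _ => by rw [map_add]; ring
  intro u
  induction u using MonoidAlgebra.induction_linear with
  | zero =>
      have : d (0 : TA R) = 0 := map_zero d
      rw [this, map_zero]
      simp
  | add f g hf hg => exact haddB f g hf hg
  | single w c =>
      have hs : (MonoidAlgebra.single w c : TA R) = c • MonoidAlgebra.single w (1 : ZMod 2) := by
        rw [MonoidAlgebra.smul_single', mul_one]
      have hof : (MonoidAlgebra.single w (1 : ZMod 2) : TA R)
          = MonoidAlgebra.of (ZMod 2) (FreeMonoid R) (FreeMonoid.ofList w.toList) := by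
        rw [FreeMonoid.ofList_toList]; rfl
      rw [hs, hof, map_smul, map_smul, smul_eq_mul, B0 w.toList, Finset.mul_sum]
      exact Finset.sum_congr rfl fun m _ => by rw [map_smul, smul_eq_mul]; ring


theorem bilinearized_differential_squares_to_zero
    (d : TA R →ₗ[ZMod 2] TA R)
    (hLeibniz : ∀ u v : TA R, d (u * v) = d u * v + u * d v)
    (h2 : ∀ u : TA R, d (d u) = 0)
    (ε1 ε2 : TA R →ₐ[ZMod 2] ZMod 2)
    (hε1 : ∀ u : TA R, ε1 (d u) = 0) (hε2 : ∀ u : TA R, ε2 (d u) = 0) :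
    ∀ a r : R,
      (∑ m : R, dmat d (fun g => ε1 (gen g)) (fun g => ε2 (gen g)) a m *
                dmat d (fun g => ε1 (gen g)) (fun g => ε2 (gen g)) m r) = 0 := by
  intro a r
  have hdm : ∀ b s : R, dmat d (fun g => ε1 (gen g)) (fun g => ε2 (gen g)) b s
      = philin (fun g => ε1 (gen g)) (fun g => ε2 (gen g)) s (d (gen b)) := by
    intro b s; rw [philin_apply]; rfl
  have hk := keyB d hLeibniz ε1 ε2 hε1 hε2 r (d (gen a))
  rw [h2, map_zero] at hk
  simp only [hdm]
  exact hk.symm
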